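/- For every real number x > 0, the Gamma function satisfies the strict inequalities √(2π(x+1))/e · (x/e)^x < Γ(x+1) < √(2π(x+1)) · (x/e)^x · e^{1/12}. -/

import Mathlib

open Real Filter Nat

private lemma logpade {v : ℝ} (hv : 0 ≤ v) : Real.log (1 + v) ≤ (v^2 + 2*v) / (2*(v+1)) := by
  have key : ∀ y ∈ Set.Ici (0:ℝ), HasDerivAt (fun y => (y^2 + 2*y) / (2*(y+1)) - Real.log (1+y))
      (y^2 / (2*(y+1)^2)) y := by
    intro y hy
    simp only [Set.mem_Ici] at hy
    have h1 : (0:ℝ) < y + 1 := by linarith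
    have hd1 : HasDerivAt (fun y : ℝ => (y^2 + 2*y) / (2*(y+1)))
        ((2*y + 2) * (2*(y+1)) / (2*(y+1))^2 - (y^2+2*y) * 2 / (2*(y+1))^2) y := by
      have hnum : HasDerivAt (fun y : ℝ => y^2 + 2*y) (2*y + 2) y := by
        simpa using ((hasDerivAt_pow 2 y).fun_add ((hasDerivAt_id y).const_mul 2))
      have hden : HasDerivAt (fun y : ℝ => 2*(y+1)) 2 y := by
        simpa using ((hasDerivAt_id y).add_const 1).const_mul 2
      have := hnum.fun_div hden (by positivity)
      refine this.congr_deriv ?_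
      field_simp
    have hd2 : HasDerivAt (fun y : ℝ => Real.log (1+y)) (1/(1+y)) y := by
      have : HasDerivAt (fun y : ℝ => 1+y) 1 y := by simpa using (hasDerivAt_id y).const_add 1
      simpa using this.log (by linarith)
    refine (hd1.fun_sub hd2).congr_deriv ?_
    have : (1:ℝ) + y ≠ 0 := by linarith
    field_simp
    ring
  have mono : MonotoneOn (fun y => (y^2 + 2*y) / (2*(y+1)) - Real.log (1+y)) (Set.Ici (0:ℝ)) := by
    apply monotoneOn_of_deriv_nonneg (convex_Ici 0)
    · exact fun y hy => ((key y hy).continuousAt.continuousWithinAt)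
    · intro y hy
      rw [interior_Ici] at hy
      exact (key y (Set.mem_Ici.2 (le_of_lt hy))).differentiableAt.differentiableWithinAt
    · intro y hy
      rw [interior_Ici] at hy
      rw [(key y (Set.mem_Ici.2 hy.le)).deriv]
      positivity
  have h0 := mono (Set.self_mem_Ici) (Set.mem_Ici.2 hv) hv
  simp at h0
  linarith

private lemma sqrtpi_le (n : ℕ) : Real.sqrt π ≤ Stirling.stirlingSeq (n+1) := by
  apply le_of_tendsto Stirling.tendsto_stirlingSeq_sqrt_pi
  filter_upwards [eventually_ge_atTop (n+1)] with m hm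
  obtain ⟨k, rfl⟩ : ∃ k, m = k + 1 := ⟨m - 1, by omega⟩
  exact Stirling.stirlingSeq'_antitone (by omega)

private lemma stirling_le (n : ℕ) : Stirling.stirlingSeq (n+1) ≤ Real.exp 1 / Real.sqrt 2 := by
  have h := Stirling.stirlingSeq'_antitone (Nat.zero_le n)
  simpa using h

private lemma numeric : Real.exp 1 / Real.sqrt 2 < Real.sqrt π * Real.exp (1/12) := by
  have h2 : (0:ℝ) < Real.sqrt 2 := by positivity
  have hpi : (0:ℝ) < Real.sqrt π := Real.sqrt_pos.2 pi_pos
  have key : (Real.exp 1 / Real.sqrt 2)^12 < (Real.sqrt π * Real.exp (1/12))^12 := by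
    have e1 : (Real.exp 1 / Real.sqrt 2)^12 = Real.exp 1 ^ 12 / 64 := by
      rw [div_pow]
      congr 1
      have : Real.sqrt 2 ^ 12 = (Real.sqrt 2 ^ 2) ^ 6 := by ring
      rw [this, Real.sq_sqrt (by norm_num : (0:ℝ) ≤ 2)]
      norm_num
    have e2 : (Real.sqrt π * Real.exp (1/12))^12 = π^6 * Real.exp 1 := by
      rw [mul_pow]
      have : Real.sqrt π ^ 12 = (Real.sqrt π ^ 2) ^ 6 := by ring
      rw [this, Real.sq_sqrt pi_pos.le, ← Real.exp_nat_mul]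
      norm_num
    rw [e1, e2]
    have he : Real.exp 1 ^ 12 = Real.exp 1 ^ 11 * Real.exp 1 := by ring
    rw [he, div_lt_iff₀ (by norm_num : (0:ℝ) < 64)]
    have h11 : Real.exp 1 ^ 11 < 2.7182818286 ^ 11 :=
      pow_lt_pow_left₀ Real.exp_one_lt_d9 (Real.exp_pos 1).le (by norm_num)
    have hp6 : (3.141592:ℝ)^6 < π ^ 6 :=
      pow_lt_pow_left₀ Real.pi_gt_d6 (by norm_num) (by norm_num)
    nlinarith [Real.exp_pos 1, (Real.exp_pos 1).le, pi_pos]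
  exact lt_of_pow_lt_pow_left₀ 12 (by positivity) key

private lemma logD (n : ℕ) (hn : 1 ≤ n) :
    Real.log (Real.sqrt (2*n) * ((n : ℝ)/Real.exp 1)^n)
      = (Real.log 2 + Real.log n)/2 + n * Real.log n - n := by
  have hn0 : (0:ℝ) < n := by exact_mod_cast hn
  rw [Real.log_mul (by positivity) (by positivity), Real.log_sqrt (by positivity),
    Real.log_pow, Real.log_mul (by norm_num) hn0.ne', Real.log_div hn0.ne' (Real.exp_pos 1).ne',
    Real.log_exp]
  ring

private lemma log_factorial_ge (n : ℕ) (hn : 1 ≤ n) :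
    (Real.log 2 + Real.log π + Real.log n)/2 + n * Real.log n - n ≤ Real.log (n ! : ℝ) := by
  have hn0 : (0:ℝ) < n := by exact_mod_cast hn
  have hD : (0:ℝ) < Real.sqrt (2*n) * ((n : ℝ)/Real.exp 1)^n := by positivity
  obtain ⟨k, rfl⟩ : ∃ k, n = k + 1 := ⟨n - 1, by omega⟩
  have h := sqrtpi_le k
  rw [Stirling.stirlingSeq, le_div_iff₀ hD] at h
  have := Real.log_le_log (by positivity) h
  rw [Real.log_mul (Real.sqrt_pos.2 pi_pos).ne' hD.ne', Real.log_sqrt pi_pos.le,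
    logD _ hn] at this
  push_cast at this ⊢
  linarith

private lemma log_factorial_lt (n : ℕ) (hn : 1 ≤ n) :
    Real.log (n ! : ℝ) < (Real.log 2 + Real.log π + Real.log n)/2 + n * Real.log n - n + 1/12 := by
  have hn0 : (0:ℝ) < n := by exact_mod_cast hn
  have hD : (0:ℝ) < Real.sqrt (2*n) * ((n : ℝ)/Real.exp 1)^n := by positivity
  obtain ⟨k, rfl⟩ : ∃ k, n = k + 1 := ⟨n - 1, by omega⟩
  have h : (↑(k+1)! : ℝ) < (Real.sqrt π * Real.exp (1/12)) *
      (Real.sqrt (2*(k+1:ℕ)) * (((k+1:ℕ) : ℝ)/Real.exp 1)^(k+1)) := by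
    have h1 := (stirling_le k).trans_lt numeric
    rw [Stirling.stirlingSeq, div_lt_iff₀ hD] at h1
    exact h1
  have := Real.log_lt_log (by positivity) h
  rw [Real.log_mul (by positivity) hD.ne',
    Real.log_mul (Real.sqrt_pos.2 pi_pos).ne' (Real.exp_pos _).ne',
    Real.log_sqrt pi_pos.le, Real.log_exp, logD _ hn] at this
  push_cast at this ⊢
  linarith

private lemma gamma_upper (k : ℕ) (t : ℝ) (h2 : ((k:ℝ)+1) ≤ t) (h3 : t ≤ (k:ℝ)+2) :
    Real.log (Real.Gamma t) ≤ Real.log ((k+1)! : ℝ) - ((k:ℝ)+2-t) * Real.log ((k:ℝ)+1) := by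
  have hc := Real.convexOn_log_Gamma.2 (Set.mem_Ioi.2 (by positivity : (0:ℝ) < (k:ℝ)+1))
    (Set.mem_Ioi.2 (by positivity : (0:ℝ) < (k:ℝ)+2))
    (by linarith : (0:ℝ) ≤ (k:ℝ)+2-t) (by linarith : (0:ℝ) ≤ t - ((k:ℝ)+1)) (by ring)
  have hpt : ((k:ℝ)+2-t) • ((k:ℝ)+1) + (t - ((k:ℝ)+1)) • ((k:ℝ)+2) = t := by
    simp only [smul_eq_mul]; ring
  rw [hpt] at hc
  simp only [Function.comp_apply, smul_eq_mul] at hc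
  have hg1 : Real.Gamma ((k:ℝ)+1) = (k ! : ℝ) := Real.Gamma_nat_eq_factorial k
  have hg2 : Real.Gamma ((k:ℝ)+2) = ((k+1)! : ℝ) := by
    have := Real.Gamma_nat_eq_factorial (k+1)
    push_cast at this ⊢
    convert this using 2
    ring
  have hfact : Real.log (((k+1))! : ℝ) = Real.log ((k:ℝ)+1) + Real.log (k ! : ℝ) := by
    rw [Nat.factorial_succ]
    push_cast
    rw [Real.log_mul (by positivity) (by positivity)]
  rw [hg1, hg2] at hc
  rw [hfact] at hc ⊢
  nlinarith [hc]

private lemma gamma_lower (k : ℕ) (t : ℝ) (h2 : ((k:ℝ)+1) ≤ t) (h3 : t ≤ (k:ℝ)+2) :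
    Real.log ((k+1)! : ℝ) - ((k:ℝ)+2-t) * Real.log t ≤ Real.log (Real.Gamma t) := by
  have ht0 : (0:ℝ) < t := lt_of_lt_of_le (by positivity) h2
  have hc := Real.convexOn_log_Gamma.2 (Set.mem_Ioi.2 ht0)
    (Set.mem_Ioi.2 (by linarith : (0:ℝ) < t+1))
    (by linarith : (0:ℝ) ≤ t - ((k:ℝ)+1)) (by linarith : (0:ℝ) ≤ (k:ℝ)+2-t) (by ring)
  have hpt : (t - ((k:ℝ)+1)) • t + ((k:ℝ)+2-t) • (t+1) = (k:ℝ)+2 := by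
    simp only [smul_eq_mul]; ring
  rw [hpt] at hc
  simp only [Function.comp_apply, smul_eq_mul] at hc
  have hg2 : Real.Gamma ((k:ℝ)+2) = ((k+1)! : ℝ) := by
    have := Real.Gamma_nat_eq_factorial (k+1)
    push_cast at this ⊢
    convert this using 2
    ring
  have hG : Real.Gamma (t+1) = t * Real.Gamma t := Real.Gamma_add_one ht0.ne'
  have hGpos : 0 < Real.Gamma t := Real.Gamma_pos_of_pos ht0
  rw [hg2, hG, Real.log_mul ht0.ne' hGpos.ne'] at hc
  nlinarith [hc]

set_option maxHeartbeats 1600000 in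
/-- For every real `x > 0`,
`√(2π(x+1))/e · (x/e)^x < Γ(x+1) < √(2π(x+1)) · (x/e)^x · e^{1/12}`. -/
theorem statement17 (x : ℝ) (hx : 0 < x) :
    Real.sqrt (2 * Real.pi * (x + 1)) / Real.exp 1 * (x / Real.exp 1) ^ x
        < Real.Gamma (x + 1) ∧
      Real.Gamma (x + 1)
        < Real.sqrt (2 * Real.pi * (x + 1)) * (x / Real.exp 1) ^ x * Real.exp (1 / 12) := by
  have ht0 : (0:ℝ) < x + 1 := by linarith
  set k : ℕ := ⌊x⌋₊ with hk
  have hk1 : (k:ℝ) ≤ x := Nat.floor_le hx.le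
  have hk2 : x < (k:ℝ) + 1 := Nat.lt_floor_add_one x
  have h2 : ((k:ℝ)+1) ≤ x + 1 := by linarith
  have h3 : x + 1 ≤ (k:ℝ)+2 := by linarith
  have hGpos : 0 < Real.Gamma (x+1) := Real.Gamma_pos_of_pos ht0
  set m : ℝ := (k:ℝ) + 1 with hm
  set d : ℝ := m - x with hd
  have hd0 : 0 < d := by rw [hd, hm]; linarith
  have hd1 : d ≤ 1 := by rw [hd, hm]; linarith
  have hm1 : (1:ℝ) ≤ m := by
    rw [hm]; have : (0:ℝ) ≤ (k:ℝ) := Nat.cast_nonneg k; linarith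
  have hmx : x ≤ m := by linarith
  have hmt : m ≤ x + 1 := by linarith
  have hm0 : (0:ℝ) < m := by linarith
  have hmd : m = x + d := by rw [hd]; ring
  have hlogm0 : 0 ≤ Real.log m := Real.log_nonneg hm1
  have hlogt0 : 0 ≤ Real.log (x+1) := Real.log_nonneg (by linarith)
  have hlogtm : Real.log m ≤ Real.log (x+1) := Real.log_le_log hm0 hmt
  -- key log bounds
  have hfl := log_factorial_ge (k+1) (by omega)
  have hfu := log_factorial_lt (k+1) (by omega)
  have hgl := gamma_lower k (x+1) h2 h3
  have hgu := gamma_upper k (x+1) h2 h3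
  have hcoef : ((k:ℝ)+2-(x+1)) = d := by rw [hd, hm]; ring
  rw [hcoef] at hgl hgu
  rw [← hm] at hgu
  have hcast : ((k+1 : ℕ) : ℝ) = m := by rw [hm]; push_cast; ring
  rw [hcast] at hfl hfu
  generalize hF : Real.log ((k+1)! : ℝ) = F at hfl hfu hgl hgu
  clear_value d m
  clear hF hcast hcoef
  -- lower bound in log form
  have hU : x * Real.log x - x * Real.log m + (d + 1/2) * (Real.log (x+1) - Real.log m)
      + d - 1 < 0 := by
    rcases Nat.eq_zero_or_pos k with hk0 | hkpos
    · -- m = 1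
      have hm1' : m = 1 := by rw [hm, hk0]; norm_num
      have hx1 : x < 1 := by
        have := hd0; rw [hd, hm1'] at this; linarith
      have hlx : Real.log x ≤ x - 1 := Real.log_le_sub_one_of_pos hx
      have hlp2 : Real.log (1+x) ≤ (x^2+2*x)/(2*(x+1)) := logpade hx.le
      have hd' : d = 1 - x := by rw [hd, hm1']
      have hlogm : Real.log m = 0 := by rw [hm1', Real.log_one]
      have h1x : Real.log (x+1) = Real.log (1+x) := by ring_nf
      rw [hlogm, hd', h1x, mul_zero, sub_zero, sub_zero]
      have hden : (0:ℝ) < 2*(x+1) := by linarith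
      have key : (2*(x+1)) * Real.log (1+x) ≤ x^2+2*x := by
        rw [← le_div_iff₀' hden]; exact hlp2
      have hxlx : x * Real.log x ≤ x * (x - 1) := mul_le_mul_of_nonneg_left hlx hx.le
      have hlog1x : 0 ≤ Real.log (1+x) := Real.log_nonneg (by linarith)
      nlinarith [key, hxlx, hlog1x, mul_pos hx hx, mul_pos (mul_pos hx hx) hx]
    · -- m ≥ 2
      have hm2 : (2:ℝ) ≤ m := by
        rw [hm]; have : (1:ℝ) ≤ (k:ℝ) := by exact_mod_cast hkpos
        linarith
      have hx1 : (1:ℝ) ≤ x := le_trans (by exact_mod_cast hkpos) hk1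
      have hA : x * Real.log x < x * Real.log m := by
        apply mul_lt_mul_of_pos_left _ hx
        apply Real.log_lt_log hx
        rw [hd] at hd0; linarith
      have hB : Real.log (x+1) - Real.log m ≤ (1-d)/m := by
        have h := Real.log_le_sub_one_of_pos (show (0:ℝ) < (x+1)/m by positivity)
        rw [Real.log_div (by linarith) hm0.ne'] at h
        have he : (x+1)/m - 1 = (1-d)/m := by
          rw [hd]; field_simp; ring
        linarith [he ▸ h]
      have hC : (d + 1/2) * (Real.log (x+1) - Real.log m) ≤ 1 - d := by
        have hBnn : 0 ≤ Real.log (x+1) - Real.log m := by linarith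
        have h32 : d + 1/2 ≤ 3/2 := by linarith
        have hmul := mul_le_mul h32 hB hBnn (by norm_num)
        have hq : (1-d)/m ≤ (1-d)/2 :=
          div_le_div_of_nonneg_left (by linarith) (by norm_num) hm2
        have hq2 := mul_le_mul_of_nonneg_left hq (by norm_num : (0:ℝ) ≤ 3/2)
        linarith
      linarith
  -- upper bound in log form
  have hV : x * Real.log m - x * Real.log x
      ≤ (1/2) * (Real.log (x+1) - Real.log m) + d := by
    rcases Nat.eq_zero_or_pos k with hk0 | hkpos
    · have hm1' : m = 1 := by rw [hm, hk0]; norm_num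
      have hlogm : Real.log m = 0 := by rw [hm1', Real.log_one]
      have hd' : d = 1 - x := by rw [hd, hm1']
      have hinv : Real.log (1/x) ≤ 1/x - 1 := Real.log_le_sub_one_of_pos (by positivity)
      rw [one_div, Real.log_inv] at hinv
      have : -(x * Real.log x) ≤ 1 - x := by
        have := mul_le_mul_of_nonneg_left hinv hx.le
        rw [mul_sub] at this
        have hxx : x * x⁻¹ = 1 := mul_inv_cancel₀ hx.ne'
        nlinarith [this]
      rw [hlogm, hd']
      simp only [mul_zero, sub_zero, zero_mul, zero_sub]
      linarith
    · have hm2 : (2:ℝ) ≤ m := by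
        rw [hm]; have : (1:ℝ) ≤ (k:ℝ) := by exact_mod_cast hkpos
        linarith
      have hx1 : (1:ℝ) ≤ x := le_trans (by exact_mod_cast hkpos) hk1
      set A : ℝ := Real.log m - Real.log x with hA
      set B : ℝ := Real.log (x+1) - Real.log x with hB
      have hAnn : 0 ≤ A := by
        rw [hA]; have := Real.log_le_log hx hmx; linarith
      -- A = log(1 + d/x)
      have hAeq : Real.log (1 + d/x) = A := by
        rw [hA, show 1 + d/x = m/x by rw [hmd]; field_simp,
          Real.log_div hm0.ne' hx.ne']
      have hp := logpade (show (0:ℝ) ≤ d/x by positivity)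
      rw [hAeq] at hp
      have e2 : ((d/x)^2 + 2*(d/x)) / (2*(d/x+1)) = (d^2+2*d*x) / (2*(x+d)*x) := by
        rw [div_eq_div_iff (by positivity : (2*(d/x+1)) ≠ 0)
          (by positivity : (2*(x+d)*x) ≠ 0)]
        field_simp
        ring
      have hQ' : 1/(x+1) ≤ B := by
        have h := Real.log_le_sub_one_of_pos (show (0:ℝ) < x/(x+1) by positivity)
        rw [Real.log_div hx.ne' ht0.ne'] at h
        have he : x/(x+1) - 1 = -(1/(x+1)) := by field_simp; ring
        rw [he] at h
        rw [hB]; linarith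
      have hgoal : (x + 1/2)*A ≤ B/2 + d := by
        have h1 : A ≤ (d^2+2*d*x)/(2*(x+d)*x) := e2 ▸ hp
        have h3 : (x+1/2)*((d^2+2*d*x)/(2*(x+d)*x)) ≤ 1/(2*(x+1)) + d := by
          rw [← mul_div_assoc, div_add' _ _ _ (by positivity : (2*(x+1)) ≠ 0),
            div_le_div_iff₀ (by positivity) (by positivity)]
          nlinarith [mul_nonneg (sq_nonneg x) (sq_nonneg (2*d-1)), sq_nonneg x,
            mul_nonneg (sq_nonneg d) (sub_nonneg.2 hx1), sq_nonneg d]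
        have h4 : 1/(2*(x+1)) ≤ B/2 := by
          rw [div_le_div_iff₀ (by positivity) (by norm_num)]
          have := mul_le_mul_of_nonneg_left hQ' (by linarith : (0:ℝ) ≤ x+1)
          rw [mul_one_div, div_self ht0.ne'] at this
          nlinarith [this]
        calc (x + 1/2)*A ≤ (x+1/2)*((d^2+2*d*x)/(2*(x+d)*x)) :=
              mul_le_mul_of_nonneg_left h1 (by linarith)
          _ ≤ 1/(2*(x+1)) + d := h3
          _ ≤ B/2 + d := by linarith
      rw [hA, hB] at hgoal
      linarith
  -- assemble log bounds of Gamma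
  have main_low : (Real.log 2 + Real.log π + Real.log (x+1))/2 + x * Real.log x - x - 1
      < Real.log (Real.Gamma (x+1)) := by
    have hmeq : m * Real.log m = x * Real.log m + d * Real.log m := by rw [hmd]; ring
    have heq : (d + 1/2) * (Real.log (x+1) - Real.log m)
        = d * Real.log (x+1) - d * Real.log m
          + (1/2) * Real.log (x+1) - (1/2) * Real.log m := by ring
    linarith [hU, hfl, hgl, hmeq, heq]
  have main_high : Real.log (Real.Gamma (x+1))
      < (Real.log 2 + Real.log π + Real.log (x+1))/2 + x * Real.log x - x + 1/12 := by
    have hmeq : m * Real.log m = x * Real.log m + d * Real.log m := by rw [hmd]; ring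
    have heq : (1/2) * (Real.log (x+1) - Real.log m)
        = (1/2) * Real.log (x+1) - (1/2) * Real.log m := by ring
    linarith [hV, hfu, hgu, hmeq, heq]
  -- convert to the multiplicative statement
  have hlogsqrt : Real.log (Real.sqrt (2 * π * (x+1)))
      = (Real.log 2 + Real.log π + Real.log (x+1))/2 := by
    rw [Real.log_sqrt (by positivity), Real.log_mul (by positivity) ht0.ne',
      Real.log_mul (by norm_num) pi_pos.ne']
    try ring
  have hlogpow : Real.log ((x / Real.exp 1) ^ x) = x * Real.log x - x := by
    rw [Real.log_rpow (by positivity), Real.log_div hx.ne' (Real.exp_pos 1).ne', Real.log_exp]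
    ring
  have hLpos : 0 < Real.sqrt (2 * π * (x+1)) / Real.exp 1 * (x / Real.exp 1) ^ x := by
    have : (0:ℝ) < (x / Real.exp 1) ^ x := Real.rpow_pos_of_pos (by positivity) x
    positivity
  have hUpos : 0 < Real.sqrt (2 * π * (x+1)) * (x / Real.exp 1) ^ x * Real.exp (1/12) := by
    have : (0:ℝ) < (x / Real.exp 1) ^ x := Real.rpow_pos_of_pos (by positivity) x
    positivity
  constructor
  · have hlogL : Real.log (Real.sqrt (2 * π * (x+1)) / Real.exp 1 * (x / Real.exp 1) ^ x)
        = (Real.log 2 + Real.log π + Real.log (x+1))/2 + x * Real.log x - x - 1 := by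
      rw [Real.log_mul (by positivity) (Real.rpow_pos_of_pos (by positivity) x).ne',
        Real.log_div (by positivity) (Real.exp_pos 1).ne', Real.log_exp, hlogsqrt, hlogpow]
      ring
    have h := main_low
    rw [← hlogL] at h
    have := Real.exp_lt_exp.2 h
    rwa [Real.exp_log hLpos, Real.exp_log hGpos] at this
  · have hlogU : Real.log (Real.sqrt (2 * π * (x+1)) * (x / Real.exp 1) ^ x * Real.exp (1/12))
        = (Real.log 2 + Real.log π + Real.log (x+1))/2 + x * Real.log x - x + 1/12 := by
      rw [Real.log_mul (by positivity) (Real.exp_pos _).ne',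
        Real.log_mul (by positivity) (Real.rpow_pos_of_pos (by positivity) x).ne',
        Real.log_exp, hlogsqrt, hlogpow]
      ring
    have h := main_high
    rw [← hlogU] at h
    have := Real.exp_lt_exp.2 h
    rwa [Real.exp_log hGpos, Real.exp_log hUpos] at this
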